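/- Let G = ⟨H, t | t a t⁻¹ = φ(a) for a ∈ A⟩ be an HNN extension with associated subgroups A, B ≤ H and isomorphism φ : A → B. Let C ⊆ H with 1 ∈ C be such that every element of H factors uniquely as an element of A times an element of C, and let D ⊆ H with 1 ∈ D be such that every element of H factors uniquely as an element of B times an element of D. Then every g ∈ G can be written in exactly one way as g = x₀·t^{ε₁}·x₁·⋯·t^{ε_k}·x_k with k ∈ ℕ, x₀ ∈ H, and for all 1 ≤ i ≤ k: εᵢ ∈ {+1, −1}; if εᵢ = 1 then xᵢ ∈ C; if εᵢ = −1 then xᵢ ∈ D; and if i < k and εᵢ = −ε_{i+1} then xᵢ ≠ 1. -/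

import Mathlib

universe u

open Monoid

/-- The number of words of length `n` over `α` lying in `L`. -/
noncomputable def wordCount {α : Type*} (L : Set (List α)) (n : ℕ) : ℕ :=
  Nat.card {w : List α // w ∈ L ∧ w.length = n}

/-- A set of words over a finite alphabet is strongly negligible: the number of its words of
length `n` is at most `C·ρⁿ·|Σ|ⁿ` for some constants `C > 0` and `0 < ρ < 1`. -/
def StronglyNegligible {α : Type*} [Fintype α] (L : Set (List α)) : Prop :=
  ∃ C ρ : ℝ, 0 < C ∧ 0 < ρ ∧ ρ < 1 ∧ ∀ n : ℕ,
    (wordCount L n : ℝ) ≤ C * ρ ^ n * (Fintype.card α : ℝ) ^ n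

/-- A set of words is strongly generic if its complement is strongly negligible. -/
def StronglyGeneric {α : Type*} [Fintype α] (L : Set (List α)) : Prop :=
  StronglyNegligible Lᶜ

/-- `η : α → G` together with the involution `inv` is a symmetric generating set:
`inv` is a fixed-point-free involution, `η (inv a) = (η a)⁻¹`, and the image of `η`
generates `G` as a group. -/
def IsSymmetricGen {α G : Type*} [Group G] (η : α → G) (inv : α → α) : Prop :=
  (∀ a, inv (inv a) = a) ∧ (∀ a, inv a ≠ a) ∧ (∀ a, η (inv a) = (η a)⁻¹) ∧
    Subgroup.closure (Set.range η) = ⊤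

/-- The element of `G` represented by a word over `α`. -/
def evalWord {α G : Type*} [Monoid G] (η : α → G) (w : List α) : G :=
  (w.map η).prod

open HNNExtension HNNExtension.NormalWord

private lemma my_isComplement {H : Type*} [Group H] (A : Subgroup H) (C : Set H)
    (hC : ∀ h : H, ∃! p : H × H, p.1 ∈ A ∧ p.2 ∈ C ∧ h = p.1 * p.2) :
    Subgroup.IsComplement (A : Set H) C := by
  rw [Subgroup.isComplement_iff_existsUnique]
  intro g
  obtain ⟨p, ⟨hp1, hp2, hp3⟩, hu⟩ := hC g
  refine ⟨(⟨p.1, hp1⟩, ⟨p.2, hp2⟩), hp3.symm, ?_⟩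
  rintro ⟨⟨a, ha⟩, ⟨c, hc⟩⟩ h
  have := hu (a, c) ⟨ha, hc, h.symm⟩
  simp only [Prod.ext_iff] at this
  ext <;> simp [this.1, this.2]

private lemma my_eq_one {H : Type*} [Group H] (A : Subgroup H) (C : Set H)
    (h1C : (1 : H) ∈ C)
    (hC : ∀ h : H, ∃! p : H × H, p.1 ∈ A ∧ p.2 ∈ C ∧ h = p.1 * p.2)
    {x : H} (hxC : x ∈ C) (hxA : x ∈ A) : x = 1 := by
  obtain ⟨p, _, hu⟩ := hC x
  have h1 := hu (x, 1) ⟨hxA, h1C, by simp⟩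
  have h2 := hu (1, x) ⟨one_mem _, hxC, by simp⟩
  rw [← h2] at h1
  exact (congrArg Prod.fst h1)

private lemma my_chain'_imp {α : Type*} {R S : α → α → Prop} :
    ∀ {l : List α}, (∀ a ∈ l, ∀ b ∈ l, R a b → S a b) → l.Chain' R → l.Chain' S
  | [], _, _ => List.isChain_nil
  | [_], _, _ => List.isChain_singleton _
  | a :: b :: l, h, hc => by
    rw [List.Chain', List.isChain_cons_cons] at hc ⊢
    exact ⟨h a (by simp) b (by simp) hc.1,
      my_chain'_imp (fun x hx y hy => h x (List.mem_cons_of_mem _ hx)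
        y (List.mem_cons_of_mem _ hy)) hc.2⟩

/-- Normal form in an HNN extension `G = ⟨H, t | t a t⁻¹ = φ(a), a ∈ A⟩`:
given transversals `C` of `A` in `H` and `D` of `B` in `H` (both containing `1`), every
`g ∈ G` is uniquely of the form `g = x₀ t^{ε₁} x₁ ⋯ t^{ε_k} x_k` with `x₀ ∈ H`,
`εᵢ ∈ {1, -1}`, `xᵢ ∈ C` if `εᵢ = 1`, `xᵢ ∈ D` if `εᵢ = -1`, and `xᵢ ≠ 1` whenever
`εᵢ = -ε_{i+1}` with `i < k`. -/
theorem stmt_7 {H : Type*} [Group H] (A B : Subgroup H) (φ : A ≃* B)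
    (C D : Set H) (h1C : (1 : H) ∈ C) (h1D : (1 : H) ∈ D)
    (hC : ∀ h : H, ∃! p : H × H, p.1 ∈ A ∧ p.2 ∈ C ∧ h = p.1 * p.2)
    (hD : ∀ h : H, ∃! p : H × H, p.1 ∈ B ∧ p.2 ∈ D ∧ h = p.1 * p.2)
    (g : HNNExtension H A B φ) :
    ∃! p : H × List (ℤ × H),
      (∀ q ∈ p.2, (q.1 = 1 ∨ q.1 = -1) ∧ (q.1 = 1 → q.2 ∈ C) ∧ (q.1 = -1 → q.2 ∈ D)) ∧
      List.Chain' (fun q q' : ℤ × H => q.1 = -q'.1 → q.2 ≠ 1) p.2 ∧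
      g = HNNExtension.of p.1 *
        (p.2.map (fun q : ℤ × H =>
          (HNNExtension.t : HNNExtension H A B φ) ^ q.1 * HNNExtension.of q.2)).prod := by
  classical
  let d : TransversalPair H A B :=
    { set := fun u => if u = 1 then C else D
      compl := fun u => by
        rcases Int.units_eq_one_or u with rfl | rfl
        · simpa using my_isComplement A C hC
        · simpa using my_isComplement B D hD }
  set w : NormalWord d := equiv φ d g with hw
  have hgw : g = ReducedWord.prod φ w.toReducedWord :=
    ((equiv φ d).symm_apply_apply g).symm
  refine ⟨(w.head, w.toList.map fun q => ((q.1 : ℤ), q.2)), ⟨?_, ?_, ?_⟩, ?_⟩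
  · -- membership conditions
    intro q hq
    obtain ⟨⟨u, x⟩, hmem, rfl⟩ := List.mem_map.1 hq
    have hset := w.mem_set u x hmem
    dsimp only
    rcases Int.units_eq_one_or u with rfl | rfl
    · replace hset : x ∈ (if (1 : ℤˣ) = 1 then C else D) := hset
      rw [if_pos rfl] at hset
      exact ⟨Or.inl (by simp), fun _ => hset, fun hcon => by norm_num at hcon⟩
    · replace hset : x ∈ (if (-1 : ℤˣ) = 1 then C else D) := hset
      rw [if_neg (by decide)] at hset
      exact ⟨Or.inr (by simp), fun hcon => by norm_num at hcon, fun _ => hset⟩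
  · -- chain condition
    rw [List.Chain', List.isChain_map]
    refine List.IsChain.imp ?_ w.chain
    rintro ⟨u, x⟩ ⟨u', x'⟩ h
    dsimp only
    intro hneg hx1
    subst hx1
    have hu : u = u' := h (one_mem _)
    subst hu
    rcases Int.units_eq_one_or u with rfl | rfl <;> norm_num at hneg
  · -- product condition
    rw [hgw]
    simp only [ReducedWord.prod, List.map_map]
    rfl
  · -- uniqueness
    rintro ⟨h₀, l⟩ ⟨hp1, hp2, hp3⟩
    simp only at hp1 hp2 hp3
    let w' : NormalWord d :=
      { head := h₀
        toList := l.map fun q => ((if q.1 = 1 then 1 else -1 : ℤˣ), q.2)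
        mem_set := by
          intro u x hmem
          obtain ⟨⟨e, y⟩, hq, heq⟩ := List.mem_map.1 hmem
          rw [Prod.mk.injEq] at heq
          obtain ⟨hu, rfl⟩ := heq
          obtain ⟨h1 | h1, hqC, hqD⟩ := hp1 _ hq
          all_goals dsimp only at h1 hqC hqD hu
          · rw [if_pos h1] at hu
            subst hu
            show y ∈ (if (1 : ℤˣ) = 1 then C else D)
            rw [if_pos rfl]
            exact hqC h1
          · rw [if_neg (by rw [h1]; norm_num)] at hu
            subst hu
            show y ∈ (if (-1 : ℤˣ) = 1 then C else D)
            rw [if_neg (by decide)]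
            exact hqD h1
        chain := by
          rw [List.isChain_map]
          refine my_chain'_imp ?_ hp2
          rintro ⟨e, x⟩ hmem ⟨e', x'⟩ hmem' h hsub
          dsimp only at h hsub ⊢
          obtain ⟨he | he, hxC, hxD⟩ := hp1 _ hmem <;>
            obtain ⟨he' | he', -, -⟩ := hp1 _ hmem' <;>
            dsimp only at he he' hxC hxD
          · rw [if_pos he, if_pos he']
          · exfalso
            rw [if_pos he] at hsub
            exact h (by simp [he, he'])
              (my_eq_one A C h1C hC (hxC he) (by simpa using hsub))
          · exfalso
            rw [if_neg (by rw [he]; norm_num)] at hsub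
            exact h (by simp [he, he'])
              (my_eq_one B D h1D hD (hxD he) (by simpa using hsub))
          · rw [if_neg (by rw [he]; norm_num), if_neg (by rw [he']; norm_num)] }
    have hmapeq : l.map ((fun x : ℤˣ × H => t ^ (x.1 : ℤ) * of x.2) ∘
          fun q : ℤ × H => ((if q.1 = 1 then 1 else -1 : ℤˣ), q.2))
        = l.map (fun q : ℤ × H =>
            (t : HNNExtension H A B φ) ^ q.1 * HNNExtension.of q.2) := by
      refine List.map_congr_left ?_
      rintro ⟨e, x⟩ hmem
      obtain ⟨he | he, -, -⟩ := hp1 _ hmem <;> dsimp only at he ⊢ <;>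
        rw [he] <;> norm_num
    have hprod : ReducedWord.prod φ w'.toReducedWord = g := by
      rw [hp3]
      simp only [ReducedWord.prod]
      show HNNExtension.of h₀ * _ = _
      rw [List.map_map, hmapeq]
    have hww : w' = w := by
      apply NormalWord.prod_injective φ d
      show ReducedWord.prod φ w'.toReducedWord = ReducedWord.prod φ w.toReducedWord
      rw [hprod, hgw]
    have hhead : w.head = h₀ := by rw [← hww]
    have htl : w.toList = l.map fun q : ℤ × H =>
        ((if q.1 = 1 then 1 else -1 : ℤˣ), q.2) := by rw [← hww]
    refine Prod.ext (by simp [hhead]) ?_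
    show l = w.toList.map fun q : ℤˣ × H => ((q.1 : ℤ), q.2)
    rw [htl, List.map_map]
    have : l.map ((fun q : ℤˣ × H => ((q.1 : ℤ), q.2)) ∘
          fun q : ℤ × H => ((if q.1 = 1 then 1 else -1 : ℤˣ), q.2)) = l.map id := by
      refine List.map_congr_left ?_
      rintro ⟨e, x⟩ hmem
      obtain ⟨he | he, -, -⟩ := hp1 _ hmem <;> dsimp only at he ⊢ <;>
        rw [he] <;> norm_num
    rw [this, List.map_id]
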